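/- Let Φ_2(s,t;ρ) be the CDF of the standard bivariate normal with correlation ρ, |ρ| < 1. Then ∂Φ_2(s,t;ρ)/∂ρ = φ_2(s,t;ρ), the standard bivariate normal density evaluated at (s,t) (Plackett's formula). -/

import Mathlib

open MeasureTheory

/-- Standard bivariate normal density with correlation `ρ`. -/
noncomputable def phi2 (ρ x y : ℝ) : ℝ :=
  (2 * Real.pi * Real.sqrt (1 - ρ^2))⁻¹ *
    Real.exp (-(x^2 - 2*ρ*x*y + y^2) / (2*(1 - ρ^2)))

/-- Standard bivariate normal CDF with correlation `ρ`. -/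
noncomputable def Phi2 (ρ s t : ℝ) : ℝ :=
  ∫ x in Set.Iic s, ∫ y in Set.Iic t, phi2 ρ x y

section PlackettAux
open Real Set Filter Topology

/-- Standard univariate normal density. -/
noncomputable def plackettGauss (x : ℝ) : ℝ := Real.exp (-x^2/2) / Real.sqrt (2*Real.pi)

local notation "gauss" => plackettGauss

lemma gauss_nonneg (x : ℝ) : 0 ≤ gauss x :=
  div_nonneg (Real.exp_pos _).le (Real.sqrt_nonneg _)

lemma gauss_le_one (x : ℝ) : gauss x ≤ 1 := by
  have h1 : Real.exp (-x^2/2) ≤ 1 := by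
    rw [Real.exp_le_one_iff]
    nlinarith [sq_nonneg x]
  have h2 : (1:ℝ) ≤ Real.sqrt (2*Real.pi) := by
    rw [show (1:ℝ) = Real.sqrt 1 by simp]
    apply Real.sqrt_le_sqrt
    nlinarith [Real.pi_gt_three]
  calc gauss x ≤ 1 / Real.sqrt (2*Real.pi) := by
        apply div_le_div_of_nonneg_right h1 ?_ |>.trans_eq rfl
        · nlinarith
      _ ≤ 1 := by
        rw [div_le_one (by nlinarith)]
        exact h2

lemma gauss_continuous : Continuous gauss := by
  unfold plackettGauss
  fun_prop

lemma gauss_integrable : Integrable gauss := by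
  have : Integrable (fun x : ℝ => Real.exp (-(1/2) * x^2)) :=
    integrable_exp_neg_mul_sq (by norm_num)
  have h := this.div_const (Real.sqrt (2*Real.pi))
  refine h.congr (Eventually.of_forall fun x => ?_)
  unfold plackettGauss
  ring_nf

/-- Standard univariate normal CDF. -/
noncomputable def plackettFstd (u : ℝ) : ℝ := ∫ y in Iic u, gauss y

local notation "Fstd" => plackettFstd

lemma hasDerivAt_Fstd (u : ℝ) : HasDerivAt Fstd (gauss u) u := by
  have key : ∀ v : ℝ, Fstd v = (∫ y in Iic 0, gauss y) + ∫ y in (0:ℝ)..v, gauss y := by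
    intro v
    have := intervalIntegral.integral_Iic_sub_Iic (f := gauss) (μ := volume)
      (gauss_integrable.integrableOn) (gauss_integrable.integrableOn) (a := 0) (b := v)
    unfold plackettFstd
    linarith [this]
  have : HasDerivAt (fun v => (∫ y in Iic 0, gauss y) + ∫ y in (0:ℝ)..v, gauss y) (gauss u) u := by
    apply HasDerivAt.const_add
    exact intervalIntegral.integral_hasDerivAt_right (gauss_integrable.intervalIntegrable)
      (gauss_continuous.stronglyMeasurable.stronglyMeasurableAtFilter)
      gauss_continuous.continuousAt
  exact this.congr_of_eventuallyEq (Eventually.of_forall key)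

lemma Fstd_continuous : Continuous Fstd :=
  continuous_iff_continuousAt.mpr fun u => (hasDerivAt_Fstd u).continuousAt

lemma Fstd_nonneg (u : ℝ) : 0 ≤ Fstd u := integral_nonneg gauss_nonneg

lemma Fstd_le (u : ℝ) : Fstd u ≤ ∫ y, gauss y :=
  setIntegral_le_integral gauss_integrable (Eventually.of_forall gauss_nonneg)

lemma subst_Iic (f : ℝ → ℝ) {c : ℝ} (hc : 0 < c) (b t : ℝ) :
    ∫ y in Iic t, f ((y - b)/c) = c * ∫ u in Iic ((t-b)/c), f u := by
  have key : ∀ y : ℝ, (Iic t).indicator (fun y => f ((y - b)/c)) y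
      = (Iic ((t-b)/c)).indicator f ((y - b)/c) := by
    intro y
    have hiff : y ≤ t ↔ (y - b)/c ≤ (t - b)/c := by
      rw [div_le_div_iff_of_pos_right hc, sub_le_sub_iff_right]
    by_cases h : y ≤ t
    · simp [indicator_apply, mem_Iic, h, hiff.mp h]
    · have h2 : ¬ ((y - b) / c ≤ (t - b) / c) := fun hh => h (hiff.mpr hh)
      simp [indicator_apply, mem_Iic, h, h2]
  rw [← integral_indicator measurableSet_Iic, ← integral_indicator measurableSet_Iic]
  simp_rw [key]
  have h1 : ∫ y : ℝ, (Iic ((t-b)/c)).indicator f ((y - b)/c)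
      = ∫ y : ℝ, (Iic ((t-b)/c)).indicator f (y/c) :=
    integral_sub_right_eq_self (fun y => (Iic ((t-b)/c)).indicator f (y/c)) b
  rw [h1, MeasureTheory.Measure.integral_comp_div (fun y => (Iic ((t-b)/c)).indicator f y) c,
    abs_of_pos hc, smul_eq_mul]

lemma one_sub_sq_pos {r : ℝ} (hr : |r| < 1) : 0 < 1 - r^2 := by
  rw [abs_lt] at hr
  nlinarith

lemma hasDerivAt_arg (t x : ℝ) {r : ℝ} (hr : |r| < 1) :
    HasDerivAt (fun r : ℝ => (t - r*x)/Real.sqrt (1-r^2))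
      ((r*t - x)/((1-r^2)*Real.sqrt (1-r^2))) r := by
  have h1 : 0 < 1 - r^2 := one_sub_sq_pos hr
  have hc : 0 < Real.sqrt (1 - r^2) := Real.sqrt_pos.mpr h1
  have hc2 : Real.sqrt (1 - r^2)^2 = 1 - r^2 := Real.sq_sqrt h1.le
  have hnum : HasDerivAt (fun r : ℝ => t - r*x) (-x) r := by
    simpa using ((hasDerivAt_id r).mul_const x).const_sub t
  have hin : HasDerivAt (fun r : ℝ => 1 - r^2) (-(2*r)) r := by
    simpa using (hasDerivAt_pow 2 r).const_sub 1
  have hden : HasDerivAt (fun r : ℝ => Real.sqrt (1-r^2)) (-(2*r) / (2 * Real.sqrt (1-r^2))) r := by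
    have hs := (Real.hasDerivAt_sqrt h1.ne').comp r hin
    refine hs.congr_deriv ?_
    field_simp
  have := hnum.div hden hc.ne'
  refine this.congr_deriv ?_
  rw [hc2]
  field_simp
  linear_combination (-x) * hc2

end PlackettAux

section PlackettMain
open Real Set Filter Topology

local notation "gauss" => plackettGauss
local notation "Fstd" => plackettFstd

/-- Closed form of the inner integral, as a function of `r` and `x`. -/
noncomputable def plackettG (t r x : ℝ) : ℝ :=
  gauss x * Fstd ((t - r*x)/Real.sqrt (1-r^2))

/-- `r`-derivative of `plackettG`. -/
noncomputable def plackettG' (t r x : ℝ) : ℝ :=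
  gauss x * (gauss ((t - r*x)/Real.sqrt (1-r^2)) * ((r*t - x)/((1-r^2)*Real.sqrt (1-r^2))))

lemma phi2_factor {r : ℝ} (hr : |r| < 1) (x y : ℝ) :
    phi2 r x y = gauss x * ((Real.sqrt (1-r^2))⁻¹ * gauss ((y - r*x)/Real.sqrt (1-r^2))) := by
  have h1 : 0 < 1 - r^2 := one_sub_sq_pos hr
  have hc : 0 < Real.sqrt (1 - r^2) := Real.sqrt_pos.mpr h1
  have hc2 : Real.sqrt (1 - r^2)^2 = 1 - r^2 := Real.sq_sqrt h1.le
  have key : -(x^2 - 2*r*x*y + y^2) / (2*(1 - r^2))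
      = -x^2/2 + -(((y - r*x)/Real.sqrt (1-r^2))^2/2) := by
    rw [div_pow, hc2]
    field_simp
    ring
  have hs : Real.sqrt (2*Real.pi) * Real.sqrt (2*Real.pi) = 2*Real.pi :=
    Real.mul_self_sqrt (by positivity)
  unfold phi2 plackettGauss
  rw [key, Real.exp_add]
  field_simp
  have hsp : Real.sqrt 2 * Real.sqrt Real.pi = Real.sqrt (2*Real.pi) :=
    (Real.sqrt_mul (by norm_num) _).symm
  linear_combination hs

lemma inner_eq (t : ℝ) {r : ℝ} (hr : |r| < 1) (x : ℝ) :
    ∫ y in Iic t, phi2 r x y = plackettG t r x := by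
  have h1 : 0 < 1 - r^2 := one_sub_sq_pos hr
  have hc : 0 < Real.sqrt (1 - r^2) := Real.sqrt_pos.mpr h1
  simp_rw [phi2_factor hr x]
  rw [integral_const_mul, integral_const_mul, subst_Iic gauss hc (r*x) t]
  unfold plackettG plackettFstd
  field_simp

lemma hasDerivAt_G (t x : ℝ) {r : ℝ} (hr : |r| < 1) :
    HasDerivAt (fun r => plackettG t r x) (plackettG' t r x) r := by
  have h := ((hasDerivAt_Fstd ((t - r*x)/Real.sqrt (1-r^2))).comp r
    (hasDerivAt_arg t x hr)).const_mul (gauss x)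
  exact h

/-- The derivative in `x` of `x ↦ phi2 ρ x t` is `plackettG' t ρ x`. -/
lemma hasDerivAt_phi2x (t : ℝ) {ρ : ℝ} (hρ : |ρ| < 1) (x : ℝ) :
    HasDerivAt (fun x => phi2 ρ x t) (plackettG' t ρ x) x := by
  have h1 : 0 < 1 - ρ^2 := one_sub_sq_pos hρ
  have hc : 0 < Real.sqrt (1 - ρ^2) := Real.sqrt_pos.mpr h1
  have hc2 : Real.sqrt (1 - ρ^2)^2 = 1 - ρ^2 := Real.sq_sqrt h1.le
  have h0 : HasDerivAt (fun x : ℝ => x^2 - 2*ρ*x*t + t^2) (2*x - 2*ρ*t) x := by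
    have h := ((hasDerivAt_pow 2 x).sub ((hasDerivAt_id x).const_mul (2*ρ*t))).add_const (t^2)
    have hfe : (fun z : ℝ => z^2 - 2*ρ*z*t + t^2) = fun z : ℝ => z^2 - 2*ρ*t*id z + t^2 := by
      funext z; simp only [id]; ring
    rw [hfe]
    refine h.congr_deriv ?_
    norm_num
  have hq : HasDerivAt (fun x : ℝ => -(x^2 - 2*ρ*x*t + t^2)/(2*(1-ρ^2)))
      (-(2*x - 2*ρ*t)/(2*(1-ρ^2))) x := by
    have := (h0.neg).div_const (2*(1-ρ^2))
    simpa [neg_div] using this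
  have h := (hq.exp).const_mul ((2 * Real.pi * Real.sqrt (1 - ρ^2))⁻¹)
  have hGoal : HasDerivAt (fun x => phi2 ρ x t)
      ((2 * Real.pi * Real.sqrt (1 - ρ^2))⁻¹ *
        (Real.exp (-(x^2 - 2*ρ*x*t + t^2)/(2*(1-ρ^2))) * (-(2*x - 2*ρ*t)/(2*(1-ρ^2))))) x := by
    unfold phi2
    exact h
  convert hGoal using 1
  -- algebra: show plackettG' t ρ x equals the above
  have hgg : gauss x * gauss ((t - ρ*x)/Real.sqrt (1-ρ^2))
      = (2*Real.pi)⁻¹ * Real.exp (-(x^2 - 2*ρ*x*t + t^2)/(2*(1-ρ^2))) := by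
    have key : -(x^2 - 2*ρ*x*t + t^2) / (2*(1 - ρ^2))
        = -x^2/2 + -(((t - ρ*x)/Real.sqrt (1-ρ^2))^2/2) := by
      rw [div_pow, hc2]
      field_simp
      ring
    have hs : Real.sqrt (2*Real.pi) * Real.sqrt (2*Real.pi) = 2*Real.pi :=
      Real.mul_self_sqrt (by positivity)
    unfold plackettGauss
    rw [key, Real.exp_add]
    field_simp
    have hsp : Real.sqrt 2 * Real.sqrt Real.pi = Real.sqrt (2*Real.pi) :=
      (Real.sqrt_mul (by norm_num) _).symm
    linear_combination -hs
  unfold plackettG'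
  rw [show gauss x * (gauss ((t - ρ*x)/Real.sqrt (1-ρ^2)) * ((ρ*t - x)/((1-ρ^2)*Real.sqrt (1-ρ^2))))
      = (gauss x * gauss ((t - ρ*x)/Real.sqrt (1-ρ^2))) * ((ρ*t - x)/((1-ρ^2)*Real.sqrt (1-ρ^2)))
    by ring, hgg]
  have hπ : (0:ℝ) < Real.pi := Real.pi_pos
  field_simp
  ring

lemma tendsto_phi2_atBot (t : ℝ) {ρ : ℝ} (hρ : |ρ| < 1) :
    Tendsto (fun x => phi2 ρ x t) atBot (𝓝 0) := by
  have h1 : 0 < 1 - ρ^2 := one_sub_sq_pos hρ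
  have hquad : Tendsto (fun x : ℝ => x^2 - 2*ρ*x*t + t^2) atBot atTop := by
    have hmul : Tendsto (fun x : ℝ => x*(x - 2*ρ*t)) atBot atTop :=
      Tendsto.atBot_mul_atBot₀ tendsto_id (tendsto_atBot_add_const_right _ _ tendsto_id)
    have hadd := tendsto_atTop_add_const_right atBot (t^2) hmul
    refine hadd.congr fun x => by ring
  have hqq : Tendsto (fun x : ℝ => -(x^2 - 2*ρ*x*t + t^2)/(2*(1-ρ^2))) atBot atBot := by
    have hdiv := hquad.atTop_div_const (by linarith : (0:ℝ) < 2*(1-ρ^2))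
    have := tendsto_neg_atTop_atBot.comp hdiv
    refine this.congr fun x => ?_
    simp only [Function.comp_apply]
    ring
  have hexp : Tendsto (fun x : ℝ => Real.exp (-(x^2 - 2*ρ*x*t + t^2)/(2*(1-ρ^2)))) atBot (𝓝 0) :=
    Real.tendsto_exp_atBot.comp hqq
  have := hexp.const_mul ((2 * Real.pi * Real.sqrt (1 - ρ^2))⁻¹)
  simpa [phi2] using this

end PlackettMain

open Real Set Filter Metric Topology in
/-- Plackett's formula: `∂Φ₂(s,t;ρ)/∂ρ = φ₂(s,t;ρ)` for `|ρ| < 1`. -/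
theorem plackett (s t ρ : ℝ) (hρ : |ρ| < 1) :
    HasDerivAt (fun r => Phi2 r s t) (phi2 ρ s t) ρ := by
  have h1 : 0 < 1 - ρ^2 := one_sub_sq_pos hρ
  set a : ℝ := (1 + |ρ|)/2 with ha_def
  set ε : ℝ := (1 - |ρ|)/2 with hε_def
  have hε : 0 < ε := by simp only [hε_def]; linarith
  have ha1 : a < 1 := by simp only [ha_def]; linarith
  have ha0 : 0 < a := by positivity
  have hball : ∀ r ∈ ball ρ ε, |r| < a := by
    intro r hr
    rw [mem_ball, Real.dist_eq] at hr
    calc |r| = |r - ρ + ρ| := by rw [sub_add_cancel]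
      _ ≤ |r - ρ| + |ρ| := abs_add_le _ _
      _ < ε + |ρ| := by linarith
      _ = a := by simp only [hε_def, ha_def]; ring
  have hball1 : ∀ r ∈ ball ρ ε, |r| < 1 := fun r hr => (hball r hr).trans ha1
  have ha2 : 0 < 1 - a^2 := by nlinarith [abs_nonneg ρ]
  set m : ℝ := (1 - a^2) * Real.sqrt (1 - a^2) with hm_def
  have hm : 0 < m := by
    have := Real.sqrt_pos.mpr ha2
    positivity
  clear_value a m
  set bound : ℝ → ℝ := fun x =>
      Real.exp (-x^2/2) / Real.sqrt (2*π) * (1 * ((|t| + 1 + x^2)/m))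
    with hbound_def
  have hsqrt2pi : 0 < Real.sqrt (2*π) := Real.sqrt_pos.mpr (by positivity)
  have hcont_arg : ∀ r : ℝ, Continuous (fun x : ℝ => (t - r*x)/Real.sqrt (1-r^2)) :=
    fun r => (continuous_const.sub (continuous_const.mul continuous_id)).div_const _
  have hcontG : ∀ r : ℝ, Continuous (fun x => plackettG t r x) := by
    intro r
    unfold plackettG
    exact gauss_continuous.mul (Fstd_continuous.comp (hcont_arg r))
  have main := hasDerivAt_integral_of_dominated_loc_of_deriv_le (μ := volume.restrict (Iic s))
    (F := fun r x => plackettG t r x) (F' := fun r x => plackettG' t r x)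
    (x₀ := ρ) (bound := bound) (ball_mem_nhds ρ hε)
    (Eventually.of_forall fun r => (hcontG r).aestronglyMeasurable)
    ?_ ?_ ?_ ?_ ?_
  · obtain ⟨hint', hderiv⟩ := main
    have hval : ∫ x in Iic s, plackettG' t ρ x = phi2 ρ s t := by
      have h := integral_Iic_of_hasDerivAt_of_tendsto' (f := fun x => phi2 ρ x t)
        (f' := fun x => plackettG' t ρ x) (a := s)
        (fun x _ => hasDerivAt_phi2x t hρ x) hint' (tendsto_phi2_atBot t hρ)
      rw [h, sub_zero]
    rw [hval] at hderiv
    refine hderiv.congr_of_eventuallyEq ?_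
    have hopen : IsOpen {r : ℝ | |r| < 1} := isOpen_Iio.preimage continuous_abs
    filter_upwards [hopen.mem_nhds hρ] with r hr
    unfold Phi2
    exact setIntegral_congr_fun measurableSet_Iic fun x _ => inner_eq t hr x
  · -- hF_int
    apply Integrable.mono'
      ((gauss_integrable.const_mul (∫ y, plackettGauss y)).restrict (s := Iic s))
      (hcontG ρ).aestronglyMeasurable
    refine Eventually.of_forall fun x => ?_
    unfold plackettG
    rw [Real.norm_eq_abs, abs_of_nonneg (mul_nonneg (gauss_nonneg x) (Fstd_nonneg _))]
    rw [mul_comm (∫ y, plackettGauss y) _]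
    exact mul_le_mul_of_nonneg_left (Fstd_le _) (gauss_nonneg x)
  · -- hF'_meas
    apply Continuous.aestronglyMeasurable
    unfold plackettG'
    exact gauss_continuous.mul ((gauss_continuous.comp (hcont_arg ρ)).mul
      ((continuous_const.sub continuous_id).div_const _))
  · -- h_bound
    refine Eventually.of_forall fun x r hr => ?_
    have hr1 : |r| < 1 := hball1 r hr
    have hra : |r| < a := hball r hr
    have h1r : 0 < 1 - r^2 := one_sub_sq_pos hr1
    have hcr : 0 < Real.sqrt (1 - r^2) := Real.sqrt_pos.mpr h1r
    have hmono : m ≤ (1 - r^2) * Real.sqrt (1 - r^2) := by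
      have h2 : 1 - a^2 ≤ 1 - r^2 := by nlinarith [abs_nonneg r, sq_abs r]
      have h3 : Real.sqrt (1 - a^2) ≤ Real.sqrt (1 - r^2) := Real.sqrt_le_sqrt h2
      have h4 := Real.sqrt_nonneg (1 - a^2)
      rw [hm_def]
      apply mul_le_mul h2 h3 h4 (by linarith)
    have habs : |r*t - x| ≤ |t| + 1 + x^2 := by
      have h4 : |r*t - x| ≤ |r*t| + |x| := abs_sub _ _
      have h5 : |r*t| ≤ |t| := by
        rw [abs_mul]
        exact mul_le_of_le_one_left (abs_nonneg t) hr1.le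
      have h6 : |x| ≤ 1 + x^2 := by nlinarith [sq_abs x, sq_nonneg (|x| - 1)]
      linarith
    have heq : ‖plackettG' t r x‖ = plackettGauss x *
        (plackettGauss ((t - r*x)/Real.sqrt (1-r^2)) *
          (|r*t - x| / ((1-r^2)*Real.sqrt (1-r^2)))) := by
      rw [Real.norm_eq_abs]
      unfold plackettG'
      rw [abs_mul, abs_mul, abs_div, abs_of_nonneg (gauss_nonneg _),
        abs_of_nonneg (gauss_nonneg _), abs_of_pos (mul_pos h1r hcr)]
    rw [heq]
    have step1 : plackettGauss ((t - r*x)/Real.sqrt (1-r^2)) *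
        (|r*t - x| / ((1-r^2)*Real.sqrt (1-r^2)))
        ≤ 1 * ((|t| + 1 + x^2)/m) := by
      apply mul_le_mul (gauss_le_one _) ?_ (by positivity) (by norm_num)
      exact div_le_div₀ (by positivity) habs hm hmono
    calc plackettGauss x * (plackettGauss ((t - r*x)/Real.sqrt (1-r^2)) *
          (|r*t - x| / ((1-r^2)*Real.sqrt (1-r^2))))
        ≤ plackettGauss x * (1 * ((|t| + 1 + x^2)/m)) :=
          mul_le_mul_of_nonneg_left step1 (gauss_nonneg x)
      _ = bound x := by
          simp only [hbound_def]
          rfl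
  · -- bound integrable
    have h2exp : Integrable (fun x : ℝ => (|t|+1) * Real.exp (-(1/2)*x^2)) :=
      (integrable_exp_neg_mul_sq (by norm_num)).const_mul _
    have hx2 : Integrable (fun x : ℝ => x^2 * Real.exp (-(1/2)*x^2)) := by
      have h := integrable_rpow_mul_exp_neg_mul_sq (b := (1/2:ℝ)) (by norm_num)
        (s := (2:ℝ)) (by norm_num)
      refine h.congr (Eventually.of_forall fun x => ?_)
      simp [Real.rpow_natCast]
    have hsum := (h2exp.add hx2).div_const (Real.sqrt (2*π) * m)
    have hbint : Integrable bound := by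
      refine hsum.congr (Eventually.of_forall fun x => ?_)
      simp only [hbound_def, Pi.add_apply, show ∀ y : ℝ, -(1/2)*y^2 = -y^2/2 from fun y => by ring]
      ring
    exact hbint.restrict
  · -- h_diff
    exact Eventually.of_forall fun x r hr => hasDerivAt_G t x (hball1 r hr)
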